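/- Let a, b > 1 and c ≥ 0 with log a ≥ 1 (i.e. a ≥ e) and li(b) = li(a) + c. Then log b ≤ log a + c · (log a) / a. -/

import Mathlib

/-- The logarithmic integral `li t = ∫_2^t dτ / log τ`. -/
noncomputable def li (t : ℝ) : ℝ := ∫ τ in (2:ℝ)..t, 1 / Real.log τ

lemma li_integrable {x y : ℝ} (hx : 1 < x) (hy : 1 < y) :
    IntervalIntegrable (fun τ => 1 / Real.log τ) MeasureTheory.volume x y := by
  apply ContinuousOn.intervalIntegrable
  have hsub : Set.uIcc x y ⊆ Set.Ioi 1 := fun τ hτ => lt_of_lt_of_le (lt_min hx hy) hτ.1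
  apply ContinuousOn.div continuousOn_const
  · exact fun τ hτ => (Real.continuousAt_log (by have := hsub hτ; simp at this; linarith)).continuousWithinAt
  · exact fun τ hτ => ne_of_gt (Real.log_pos (hsub hτ))

/-- Concavity estimate for `log ∘ li⁻¹`: if `li b = li a + c` with `log a ≥ 1`,
then `log b ≤ log a + c · (log a) / a`. -/
theorem log_inverse_li_concavity_upper_bound
    (a b c : ℝ) (ha : 1 < a) (hb : 1 < b) (hc : 0 ≤ c)
    (hloga : 1 ≤ Real.log a)
    (hli : li b = li a + c) :
    Real.log b ≤ Real.log a + c * Real.log a / a := by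
  have ha0 : (0:ℝ) < a := by linarith
  have hea : Real.exp 1 ≤ a := by
    rw [← Real.exp_log ha0]; exact Real.exp_le_exp.mpr hloga
  -- a ≤ b
  have hab : a ≤ b := by
    by_contra h
    push_neg at h
    have hpos : 0 < ∫ τ in b..a, 1 / Real.log τ := by
      apply intervalIntegral.intervalIntegral_pos_of_pos_on (li_integrable hb ha)
        (fun τ hτ => by
          have : 1 < τ := lt_of_lt_of_le hb hτ.1.le
          have := Real.log_pos this
          positivity) h
    have heq : (∫ τ in b..a, 1 / Real.log τ) = -c := by
      rw [← intervalIntegral.integral_interval_sub_left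
        (li_integrable one_lt_two ha) (li_integrable one_lt_two hb)]
      have : li a - li b = -c := by rw [hli]; ring
      rw [li, li] at this
      exact this
    rw [heq] at hpos
    linarith
  -- c as an integral
  have hcint : (∫ τ in a..b, 1 / Real.log τ) = c := by
    rw [← intervalIntegral.integral_interval_sub_left
      (li_integrable one_lt_two hb) (li_integrable one_lt_two ha)]
    have : li b - li a = c := by rw [hli]; ring
    rw [li, li] at this
    exact this
  -- log b - log a as an integral
  have hlog : Real.log b - Real.log a = ∫ τ in a..b, τ⁻¹ := by
    rw [integral_inv (by
      intro h0
      rcases Set.mem_uIcc.mp h0 with ⟨h1, _⟩ | ⟨h1, _⟩ <;> linarith)]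
    rw [Real.log_div (by linarith) (by linarith)]
  -- comparison of integrals
  have hmono : (∫ τ in a..b, τ⁻¹) ≤ ∫ τ in a..b, Real.log a / a * (1 / Real.log τ) := by
    apply intervalIntegral.integral_mono_on hab
    · apply intervalIntegral.intervalIntegrable_inv
      · intro τ hτ
        rcases Set.mem_uIcc.mp hτ with ⟨h1, _⟩ | ⟨h1, _⟩ <;>
          (intro h0; rw [h0] at h1; linarith)
      · exact continuousOn_id
    · exact (li_integrable ha hb).const_mul _
    · intro τ hτ
      have hτa : a ≤ τ := hτ.1
      have hτ1 : 1 < τ := lt_of_lt_of_le ha hτa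
      have hτ0 : 0 < τ := by linarith
      have hlogτ : 0 < Real.log τ := Real.log_pos hτ1
      have hdec : Real.log τ / τ ≤ Real.log a / a :=
        Real.log_div_self_antitoneOn (by simpa using hea)
          (by simp only [Set.mem_Ici]; linarith) hτa
      rw [div_le_div_iff₀ hτ0 ha0] at hdec
      rw [div_mul_div_comm, inv_eq_one_div,
        div_le_div_iff₀ hτ0 (by positivity)]
      nlinarith
  have hconst : (∫ τ in a..b, Real.log a / a * (1 / Real.log τ)) = Real.log a / a * c := by
    rw [intervalIntegral.integral_const_mul, hcint]
  rw [hconst] at hmono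
  rw [← hlog] at hmono
  have : Real.log a / a * c = c * Real.log a / a := by ring
  linarith
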